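/- arXiv:2204.00748 — 2 statements merged into one kernel-verified Lean document; each statement's English description precedes it below -/
import Mathlib

section
/- Let $\Phi(t_1,\dots,t_d) = \frac{1}{2}\sum_{i=1}^d c_i t_i^2 - \frac{1}{6}\sum_{i,j=1}^d M_{ij} t_i^3 t_j^3$ with $c_i > 0$, $M$ symmetric with $M_{ii} > 0$ and $M_{ij} \geq 0$ for all $i,j$. If $t^* = (t_1^*,\dots,t_d^*) \in [0,\infty)^d$ is a global maximum point of $\Phi$ on $[0,\infty)^d$, then $t_i^* > 0$ for every $i$. -/
/-- If `cᵢ > 0`, `M` is symmetric with `Mᵢᵢ > 0` and `Mᵢⱼ ≥ 0`, then any global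
maximum point of `Φ` on the nonnegative orthant has all coordinates positive. -/
theorem stmt_10 {d : ℕ} (c : Fin d → ℝ) (M : Matrix (Fin d) (Fin d) ℝ)
    (hc : ∀ i, 0 < c i) (hMsym : M.IsSymm)
    (hMdiag : ∀ i, 0 < M i i) (hMnn : ∀ i j, 0 ≤ M i j)
    (Φ : (Fin d → ℝ) → ℝ)
    (hΦ : Φ = fun t => (1/2) * ∑ i, c i * t i ^ 2
        - (1/6) * ∑ i, ∑ j, M i j * t i ^ 3 * t j ^ 3)
    (tstar : Fin d → ℝ) (htnn : ∀ i, 0 ≤ tstar i)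
    (hmax : ∀ t, (∀ i, 0 ≤ t i) → Φ t ≤ Φ tstar) :
    ∀ i, 0 < tstar i := by
  intro i
  by_contra hi
  have h0 : tstar i = 0 := le_antisymm (not_lt.mp hi) (htnn i)
  set B := ∑ j, M i j * tstar j ^ 3 with hB
  have hBnn : 0 ≤ B :=
    Finset.sum_nonneg fun j _ => mul_nonneg (hMnn i j) (pow_nonneg (htnn j) 3)
  have hsym : ∀ j, M j i = M i j := fun j => by rw [← hMsym.apply]
  have hdiff : ∀ s : ℝ, Φ (Function.update tstar i s) =
      Φ tstar + (1/2)*c i*s^2 - (1/3)*B*s^3 - (1/6)*M i i*s^6 := by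
    intro s
    subst hΦ
    have hupd2 : ∀ j, c j * (Function.update tstar i s j) ^ 2
        = c j * tstar j ^ 2 + (if j = i then c i * s ^ 2 else 0) := by
      intro j
      by_cases h : j = i
      · subst h; simp [h0]
      · simp [Function.update, h]
    have hpt : ∀ j k, M j k * (Function.update tstar i s j) ^ 3 *
          (Function.update tstar i s k) ^ 3
        = M j k * tstar j ^ 3 * tstar k ^ 3
          + (if k = i then M j i * tstar j ^ 3 * s ^ 3 else 0)
          + (if j = i then M i k * s ^ 3 * tstar k ^ 3 else 0)
          + (if j = i then (if k = i then M i i * s ^ 6 else 0) else 0) := by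
      intro j k
      by_cases hj : j = i <;> by_cases hk : k = i <;>
        simp [Function.update, hj, hk, h0] <;> ring
    simp only [hupd2, hpt, Finset.sum_add_distrib, Finset.sum_ite_eq',
      Finset.mem_univ, if_true, Finset.sum_ite_irrel, Finset.sum_const_zero]
    have h1 : ∑ j, M j i * tstar j ^ 3 * s ^ 3 = B * s ^ 3 := by
      rw [hB, Finset.sum_mul]
      exact Finset.sum_congr rfl fun j _ => by rw [hsym]
    have h2 : ∑ k, M i k * s ^ 3 * tstar k ^ 3 = B * s ^ 3 := by
      rw [hB, Finset.sum_mul]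
      exact Finset.sum_congr rfl fun j _ => by ring
    rw [h1, h2]
    ring
  -- choose small s
  set A := c i with hA
  set D := M i i with hD
  set s := min 1 (A / (4 * (B + D + 1))) with hs
  have hDpos : 0 < D := hMdiag i
  have hden : 0 < 4 * (B + D + 1) := by linarith
  have hspos : 0 < s := lt_min one_pos (div_pos (hc i) hden)
  have hs1 : s ≤ 1 := min_le_left _ _
  have hsle : s * (4 * (B + D + 1)) ≤ A := by
    have := min_le_right 1 (A / (4 * (B + D + 1)))
    calc s * (4 * (B + D + 1)) ≤ (A / (4 * (B + D + 1))) * (4 * (B + D + 1)) := by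
          exact mul_le_mul_of_nonneg_right this hden.le
      _ = A := div_mul_cancel₀ _ hden.ne'
  have hgt : Φ tstar < Φ (Function.update tstar i s) := by
    rw [hdiff s]
    have hApos : 0 < A := hc i
    have hs4 : s ^ 4 ≤ s := by
      calc s ^ 4 = s * s * s * s := by ring
        _ ≤ 1 * 1 * 1 * s := by
            apply mul_le_mul_of_nonneg_right _ hspos.le
            nlinarith
        _ = s := by ring
    have e1 : s ^ 6 ≤ s ^ 2 * s := by nlinarith [mul_le_mul_of_nonneg_left hs4 (sq_nonneg s)]
    have e2 : s ^ 2 * (s * (4 * (B + D + 1))) ≤ s ^ 2 * A :=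
      mul_le_mul_of_nonneg_left hsle (sq_nonneg s)
    nlinarith [mul_pos hApos (mul_pos hspos hspos), mul_nonneg hDpos.le (sub_nonneg.mpr e1), hBnn, sq_nonneg s, mul_pos hspos hspos]
  have hle := hmax (Function.update tstar i s) (fun j => by
    by_cases h : j = i
    · subst h; simp [hspos.le]
    · simp [Function.update, h, htnn j])
  exact absurd hle (not_le.mpr hgt)
end

section
/- Let $a_i, b_i > 0$ for $i = 1,\dots,d$ and $c_{ij} \geq 0$ for $i \neq j$ with $c_{ij} = c_{ji}$, and suppose $6 b_i - 6\sum_{j\neq i} c_{ij} > 0$ for every $i$. Define $\mathcal{J}(t) = \sum_{i=1}^d a_i t_i^2 - \sum_{i=1}^d b_i t_i^6 + \sum_{i\neq j} c_{ij} t_i^3 t_j^3$ on $(0,\infty)^d$. Set $r^4 = \min_i \frac{a_i}{3 b_i}$ and choose $R > 0$ with $2 a_i R - (6 b_i - 6\sum_{j\neq i} c_{ij}) R^5 < 0$ for all $i$. Then any critical point of $\mathcal{J}$ in $(0,\infty)^d$ lies in $[r, R]^d$, and $\sup_{(0,\infty)^d} \mathcal{J} = \max_{[r,R]^d} \mathcal{J}$;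 in particular $\mathcal{J}$ attains its supremum on $(0,\infty)^d$. -/
set_option maxHeartbeats 1000000

lemma swap_sum {d : ℕ} (f : Fin d → Fin d → ℝ) :
    ∑ i, ∑ j ∈ Finset.univ.erase i, f i j = ∑ i, ∑ j ∈ Finset.univ.erase i, f j i := by
  rw [Finset.sum_comm' (s := Finset.univ) (t := fun i => Finset.univ.erase i)
    (t' := Finset.univ) (s' := fun j => Finset.univ.erase j)
    (fun x y => by simp [ne_comm, eq_comm])]

/-- Critical points of the fiber map `𝒥` lie in the box `[r,R]^d`, and `𝒥`
attains its supremum over the open positive orthant at a point of the box. -/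
theorem stmt_17 {d : ℕ} (a b : Fin d → ℝ) (c : Fin d → Fin d → ℝ)
    (ha : ∀ i, 0 < a i) (hb : ∀ i, 0 < b i)
    (hc0 : ∀ i j, i ≠ j → 0 ≤ c i j)
    (hcsym : ∀ i j, c i j = c j i)
    (hdom : ∀ i, 0 < 6 * b i - 6 * ∑ j ∈ Finset.univ.erase i, c i j)
    (J : (Fin d → ℝ) → ℝ)
    (hJ : J = fun t => ∑ i, a i * t i ^ 2 - ∑ i, b i * t i ^ 6
        + ∑ i, ∑ j ∈ Finset.univ.erase i, c i j * t i ^ 3 * t j ^ 3)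
    (hne : (Finset.univ : Finset (Fin d)).Nonempty)
    (r R : ℝ) (hr : 0 < r)
    (hr4 : r ^ 4 = Finset.univ.inf' hne fun i => a i / (3 * b i))
    (hR : 0 < R)
    (hRbig : ∀ i, 2 * a i * R
        - (6 * b i - 6 * ∑ j ∈ Finset.univ.erase i, c i j) * R ^ 5 < 0) :
    (∀ t : Fin d → ℝ, (∀ i, 0 < t i) → fderiv ℝ J t = 0 →
      ∀ i, r ≤ t i ∧ t i ≤ R) ∧
    ∃ t₀ : Fin d → ℝ, (∀ i, r ≤ t₀ i ∧ t₀ i ≤ R) ∧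
      ∀ t : Fin d → ℝ, (∀ i, 0 < t i) → J t ≤ J t₀ := by
  set C : Fin d → ℝ := fun i => ∑ j ∈ Finset.univ.erase i, c i j with hCdef
  have hCnn : ∀ i, 0 ≤ C i := by
    intro i
    exact Finset.sum_nonneg fun j hj => hc0 i j (Finset.ne_of_mem_erase hj).symm
  have hbC : ∀ i, C i < b i := fun i => by have := hdom i; simp only [hCdef] at *; linarith
  have haR : ∀ i, a i < 3 * (b i - C i) * R ^ 4 := by
    intro i
    have h := hRbig i
    have hCi : C i = ∑ j ∈ Finset.univ.erase i, c i j := rfl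
    rw [← hCi] at h
    nlinarith [hR, pow_pos hR 4, pow_pos hR 5]
  have hr4le : ∀ i, 3 * b i * r ^ 4 ≤ a i := by
    intro i
    have h1 : r ^ 4 ≤ a i / (3 * b i) := hr4 ▸ Finset.inf'_le _ (Finset.mem_univ i)
    have h2 : 0 < 3 * b i := by linarith [hb i]
    rw [le_div_iff₀ h2] at h1; linarith
  have hrR : r ≤ R := by
    obtain ⟨i₀, -, hi₀⟩ := Finset.exists_mem_eq_inf' hne (fun i => a i / (3 * b i))
    have h1 : r ^ 4 = a i₀ / (3 * b i₀) := by rw [hr4, hi₀]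
    have h2 : a i₀ < 3 * b i₀ * R ^ 4 := by nlinarith [haR i₀, hCnn i₀, pow_pos hR 4]
    have h3 : r ^ 4 < R ^ 4 := by
      rw [h1, div_lt_iff₀ (by linarith [hb i₀])]; linarith
    by_contra hcon
    push_neg at hcon
    exact absurd h3 (not_lt.mpr (pow_le_pow_left₀ hR.le hcon.le 4))
  -- coordinate projections are differentiable
  have hco : ∀ i : Fin d, Differentiable ℝ (fun t : Fin d → ℝ => t i) :=
    fun i => (ContinuousLinearMap.proj i : (Fin d → ℝ) →L[ℝ] ℝ).differentiable
  have hdiffJ : Differentiable ℝ J := by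
    rw [hJ]
    apply Differentiable.add
    · apply Differentiable.sub
      · exact Differentiable.fun_sum fun i _ => (Differentiable.pow (hco i) 2).const_mul (a i)
      · exact Differentiable.fun_sum fun i _ => (Differentiable.pow (hco i) 6).const_mul (b i)
    · exact Differentiable.fun_sum fun i _ => Differentiable.fun_sum fun j _ =>
        (((hco i).pow 3).const_mul (c i j)).mul ((hco j).pow 3)
  -- derivative identity at critical points
  have key : ∀ t : Fin d → ℝ, fderiv ℝ J t = 0 → ∀ i,
      2 * a i * t i - 6 * b i * t i ^ 5
        + 6 * (∑ j ∈ Finset.univ.erase i, c i j * t j ^ 3) * t i ^ 2 = 0 := by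
    intro t hder i
    set x : ℝ := t i with hx
    set K : ℝ := ∑ j ∈ Finset.univ.erase i, c i j * t j ^ 3 with hK
    have hL : HasDerivAt (fun s : ℝ => Function.update t i s) (Pi.single i 1) x := by
      rw [hasDerivAt_pi]
      intro k
      by_cases hk : k = i
      · subst hk
        simp only [Function.update_self, Pi.single_eq_same]
        exact hasDerivAt_id x
      · simp only [Function.update_of_ne hk, Pi.single_eq_of_ne hk]
        exact hasDerivAt_const x (t k)
    have hzero : HasDerivAt (fun s => J (Function.update t i s)) 0 x := by
      have h1 : HasFDerivAt J (0 : (Fin d → ℝ) →L[ℝ] ℝ) t := hder ▸ (hdiffJ t).hasFDerivAt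
      have hLx : Function.update t i x = t := Function.update_eq_self i t
      rw [← hLx] at h1
      simpa [Function.comp_def] using h1.comp_hasDerivAt x hL
    have hexp : HasDerivAt (fun s => J (Function.update t i s))
        (2 * a i * x - 6 * b i * x ^ 5 + 6 * K * x ^ 2) x := by
      rw [hJ]
      simp only
      have h1 : HasDerivAt (fun s => ∑ k, a k * (Function.update t i s k) ^ 2)
          (2 * a i * x) x := by
        have h1' : HasDerivAt (fun s => ∑ k, a k * (Function.update t i s k) ^ 2)
            (∑ k, if k = i then 2 * a i * x else 0) x := by
          apply HasDerivAt.fun_sum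
          intro k _
          by_cases hk : k = i
          · subst hk
            rw [if_pos rfl]
            simp only [Function.update_self]
            have h := (hasDerivAt_pow 2 x).const_mul (a k)
            exact h.congr_deriv (by push_cast; ring)
          · rw [if_neg hk]
            simp only [Function.update_of_ne hk]
            exact hasDerivAt_const x _
        simpa using h1'
      have h2 : HasDerivAt (fun s => ∑ k, b k * (Function.update t i s k) ^ 6)
          (6 * b i * x ^ 5) x := by
        have h2' : HasDerivAt (fun s => ∑ k, b k * (Function.update t i s k) ^ 6)
            (∑ k, if k = i then 6 * b i * x ^ 5 else 0) x := by
          apply HasDerivAt.fun_sum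
          intro k _
          by_cases hk : k = i
          · subst hk
            rw [if_pos rfl]
            simp only [Function.update_self]
            have h := (hasDerivAt_pow 6 x).const_mul (b k)
            exact h.congr_deriv (by push_cast; ring)
          · rw [if_neg hk]
            simp only [Function.update_of_ne hk]
            exact hasDerivAt_const x _
        simpa using h2'
      have h3 : HasDerivAt (fun s => ∑ k, ∑ j ∈ Finset.univ.erase k,
            c k j * (Function.update t i s k) ^ 3 * (Function.update t i s j) ^ 3)
          (6 * K * x ^ 2) x := by
        have h3' : HasDerivAt (fun s => ∑ k, ∑ j ∈ Finset.univ.erase k,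
              c k j * (Function.update t i s k) ^ 3 * (Function.update t i s j) ^ 3)
            (∑ k, ∑ j ∈ Finset.univ.erase k,
              (if k = i then c k j * (3 * x ^ 2) * t j ^ 3
               else if j = i then c k j * t k ^ 3 * (3 * x ^ 2) else 0)) x := by
          apply HasDerivAt.fun_sum
          intro k _
          apply HasDerivAt.fun_sum
          intro j hj
          have hjk : j ≠ k := Finset.ne_of_mem_erase hj
          by_cases hk : k = i
          · rw [if_pos hk]
            subst hk
            simp only [Function.update_self, Function.update_of_ne hjk]
            have h := ((hasDerivAt_pow 3 x).const_mul (c k j)).mul_const (t j ^ 3)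
            exact h.congr_deriv (by push_cast; ring)
          · rw [if_neg hk]
            by_cases hji : j = i
            · rw [if_pos hji]
              subst hji
              simp only [Function.update_self, Function.update_of_ne hk]
              have h := (hasDerivAt_pow 3 x).const_mul (c k j * t k ^ 3)
              exact h.congr_deriv (by push_cast; ring)
            · rw [if_neg hji]
              simp only [Function.update_of_ne hk, Function.update_of_ne hji]
              exact hasDerivAt_const x _
        convert h3' using 1
        rw [← Finset.add_sum_erase _ _ (Finset.mem_univ i)]
        have hin : (∑ j ∈ Finset.univ.erase i,
            (if i = i then c i j * (3 * x ^ 2) * t j ^ 3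
             else if j = i then c i j * t i ^ 3 * (3 * x ^ 2) else 0))
            = 3 * x ^ 2 * K := by
          rw [hK, Finset.mul_sum]
          refine Finset.sum_congr rfl fun j _ => ?_
          rw [if_pos rfl]; ring
        have hout : (∑ k ∈ Finset.univ.erase i, ∑ j ∈ Finset.univ.erase k,
            (if k = i then c k j * (3 * x ^ 2) * t j ^ 3
             else if j = i then c k j * t k ^ 3 * (3 * x ^ 2) else 0))
            = 3 * x ^ 2 * K := by
          have hstep : ∀ k ∈ Finset.univ.erase i, (∑ j ∈ Finset.univ.erase k,
              (if k = i then c k j * (3 * x ^ 2) * t j ^ 3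
               else if j = i then c k j * t k ^ 3 * (3 * x ^ 2) else 0))
              = c k i * t k ^ 3 * (3 * x ^ 2) := by
            intro k hkmem
            have hki : k ≠ i := Finset.ne_of_mem_erase hkmem
            have : ∀ j, (if k = i then c k j * (3 * x ^ 2) * t j ^ 3
                else if j = i then c k j * t k ^ 3 * (3 * x ^ 2) else 0)
                = (if j = i then c k j * t k ^ 3 * (3 * x ^ 2) else 0) := by
              intro j; rw [if_neg hki]
            rw [Finset.sum_congr rfl fun j _ => this j]
            rw [Finset.sum_ite_eq' (Finset.univ.erase k) i
              (fun j => c k j * t k ^ 3 * (3 * x ^ 2))]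
            rw [if_pos (Finset.mem_erase.mpr ⟨Ne.symm hki, Finset.mem_univ i⟩)]
          rw [Finset.sum_congr rfl hstep, hK, Finset.mul_sum]
          refine Finset.sum_congr rfl fun k _ => ?_
          rw [hcsym i k]; ring
        rw [hin, hout]
        ring
      exact (h1.sub h2).add h3
    have := hzero.unique hexp
    linarith [this]
  -- part 1
  have part1 : ∀ t : Fin d → ℝ, (∀ i, 0 < t i) → fderiv ℝ J t = 0 →
      ∀ i, r ≤ t i ∧ t i ≤ R := by
    intro t ht hder
    have hK : ∀ i, 0 ≤ ∑ j ∈ Finset.univ.erase i, c i j * t j ^ 3 := fun i =>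
      Finset.sum_nonneg fun j hj =>
        mul_nonneg (hc0 i j (Finset.ne_of_mem_erase hj).symm) (pow_nonneg (ht j).le 3)
    have hlow : ∀ i, r ≤ t i := by
      intro i
      have heq := key t hder i
      have hKi := hK i
      have hai : a i ≤ 3 * b i * t i ^ 4 := by
        nlinarith [ht i, sq_nonneg (t i), mul_pos (ht i) (ht i)]
      have h4 : r ^ 4 ≤ t i ^ 4 := by nlinarith [hr4le i, hb i]
      by_contra hcon
      push_neg at hcon
      have : t i ^ 4 < r ^ 4 := by
        have := pow_lt_pow_left₀ hcon (ht i).le (n := 4) (by norm_num)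
        exact this
      linarith
    obtain ⟨i₀, -, hmax⟩ := Finset.exists_max_image Finset.univ t hne
    have hup : t i₀ ≤ R := by
      by_contra hcon
      push_neg at hcon
      have heq := key t hder i₀
      have hKle : ∑ j ∈ Finset.univ.erase i₀, c i₀ j * t j ^ 3 ≤ C i₀ * t i₀ ^ 3 := by
        have : C i₀ * t i₀ ^ 3 = ∑ j ∈ Finset.univ.erase i₀, c i₀ j * t i₀ ^ 3 := by
          rw [hCdef]; simp only; rw [Finset.sum_mul]
        rw [this]
        refine Finset.sum_le_sum fun j hj => ?_
        have hc := hc0 i₀ j (Finset.ne_of_mem_erase hj).symm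
        have : t j ^ 3 ≤ t i₀ ^ 3 :=
          pow_le_pow_left₀ (ht j).le (hmax j (Finset.mem_univ j)) 3
        exact mul_le_mul_of_nonneg_left this hc
      have hx : 0 < t i₀ := ht i₀
      have e1 := mul_le_mul_of_nonneg_right hKle (sq_nonneg (t i₀))
      have e4 : 2 * a i₀ * t i₀ < 6 * (b i₀ - C i₀) * R ^ 4 * t i₀ := by
        have h := mul_lt_mul_of_pos_right (haR i₀) hx
        nlinarith [h]
      have e5 : 6 * (b i₀ - C i₀) * R ^ 4 * t i₀ ≤ 6 * (b i₀ - C i₀) * t i₀ ^ 4 * t i₀ := by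
        have h4 : R ^ 4 ≤ t i₀ ^ 4 := pow_le_pow_left₀ hR.le hcon.le 4
        have hbCi : (0:ℝ) ≤ b i₀ - C i₀ := by linarith [hbC i₀]
        have h5 := mul_le_mul_of_nonneg_right
          (mul_le_mul_of_nonneg_left h4 hbCi) hx.le
        nlinarith [h5]
      nlinarith [heq, e1, e4, e5]
    exact fun i => ⟨hlow i, (hmax i (Finset.mem_univ i)).trans hup⟩
  -- clamping from below
  have clampLow : ∀ t : Fin d → ℝ, (∀ i, 0 ≤ t i) → J t ≤ J (fun i => max (t i) r) := by
    intro t ht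
    set v : Fin d → ℝ := fun i => max (t i) r with hv
    rw [hJ]
    simp only
    have h1 : ∑ i, a i * t i ^ 2 - ∑ i, b i * t i ^ 6
        ≤ ∑ i, a i * v i ^ 2 - ∑ i, b i * v i ^ 6 := by
      rw [← Finset.sum_sub_distrib, ← Finset.sum_sub_distrib]
      apply Finset.sum_le_sum
      intro i _
      rcases le_or_gt r (t i) with h | h
      · have : v i = t i := max_eq_left h
        rw [this]
      · have hvi : v i = r := max_eq_right h.le
        rw [hvi]
        have h21 : (0:ℝ) ≤ r ^ 2 - t i ^ 2 := by nlinarith [ht i]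
        have h23 : t i ^ 2 ≤ r ^ 2 := by nlinarith [ht i]
        have h24 : t i ^ 4 ≤ r ^ 4 := by nlinarith [h23, sq_nonneg (t i), ht i, hr]
        have h22 : (0:ℝ) ≤ a i - b i * (r ^ 4 + r ^ 2 * t i ^ 2 + t i ^ 4) := by
          nlinarith [hr4le i,
            mul_le_mul_of_nonneg_left h23 (mul_nonneg (hb i).le (sq_nonneg r)),
            mul_le_mul_of_nonneg_left h24 (hb i).le]
        nlinarith [mul_nonneg h21 h22]
    have h2 : ∑ i, ∑ j ∈ Finset.univ.erase i, c i j * t i ^ 3 * t j ^ 3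
        ≤ ∑ i, ∑ j ∈ Finset.univ.erase i, c i j * v i ^ 3 * v j ^ 3 := by
      apply Finset.sum_le_sum
      intro i _
      apply Finset.sum_le_sum
      intro j hj
      have hcij : 0 ≤ c i j := hc0 i j (Finset.ne_of_mem_erase hj).symm
      have h1 : t i ≤ v i := le_max_left _ _
      have h2 : t j ≤ v j := le_max_left _ _
      have h3 : (0:ℝ) ≤ t i := ht i
      have h4 : (0:ℝ) ≤ t j := ht j
      gcongr
    linarith
  -- clamping from above
  have clampHigh : ∀ t : Fin d → ℝ, (∀ i, 0 ≤ t i) → J t ≤ J (fun i => min (t i) R) := by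
    intro t ht
    set u : Fin d → ℝ := fun i => min (t i) R with hu
    set p : Fin d → ℝ := fun i => t i ^ 3 - u i ^ 3 with hp
    have hut : ∀ i, u i ≤ t i := fun i => min_le_left _ _
    have huR : ∀ i, u i ≤ R := fun i => min_le_right _ _
    have hu0 : ∀ i, 0 ≤ u i := fun i => le_min (ht i) hR.le
    have hpnn : ∀ i, 0 ≤ p i := fun i => by
      have h := pow_le_pow_left₀ (hu0 i) (hut i) 3
      simp only [hp]; linarith
    have huR3 : ∀ i, u i ^ 3 ≤ R ^ 3 := fun i => pow_le_pow_left₀ (hu0 i) (huR i) 3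
    have hswap0 : ∑ i, ∑ j ∈ Finset.univ.erase i, c i j * (t i ^ 3 * u j ^ 3)
        = ∑ i, ∑ j ∈ Finset.univ.erase i, c i j * (u i ^ 3 * t j ^ 3) := by
      rw [swap_sum (fun i j => c i j * (t i ^ 3 * u j ^ 3))]
      exact Finset.sum_congr rfl fun i _ => Finset.sum_congr rfl fun j _ => by
        rw [hcsym i j]; ring
    have hswap2 : ∑ i, ∑ j ∈ Finset.univ.erase i, c i j * p j ^ 2
        = ∑ i, ∑ j ∈ Finset.univ.erase i, c i j * p i ^ 2 := by
      rw [swap_sum (fun i j => c i j * p j ^ 2)]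
      exact Finset.sum_congr rfl fun i _ => Finset.sum_congr rfl fun j _ => by
        rw [hcsym i j]
    have hid : ∑ i, ∑ j ∈ Finset.univ.erase i, c i j * (p i * (t j ^ 3 + u j ^ 3))
        = (∑ i, ∑ j ∈ Finset.univ.erase i, c i j * t i ^ 3 * t j ^ 3
            - ∑ i, ∑ j ∈ Finset.univ.erase i, c i j * u i ^ 3 * u j ^ 3)
          + (∑ i, ∑ j ∈ Finset.univ.erase i, c i j * (t i ^ 3 * u j ^ 3)
            - ∑ i, ∑ j ∈ Finset.univ.erase i, c i j * (u i ^ 3 * t j ^ 3)) := by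
      rw [← Finset.sum_sub_distrib, ← Finset.sum_sub_distrib, ← Finset.sum_add_distrib]
      refine Finset.sum_congr rfl fun i _ => ?_
      rw [← Finset.sum_sub_distrib, ← Finset.sum_sub_distrib, ← Finset.sum_add_distrib]
      refine Finset.sum_congr rfl fun j _ => ?_
      simp only [hp]; ring
    have hb1 : ∑ i, ∑ j ∈ Finset.univ.erase i, c i j * (p i * (t j ^ 3 + u j ^ 3))
        ≤ ∑ i, ∑ j ∈ Finset.univ.erase i,
            (c i j * (p i * p j) + c i j * (p i * (2 * R ^ 3))) := by
      refine Finset.sum_le_sum fun i _ => Finset.sum_le_sum fun j hj => ?_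
      have hcij : 0 ≤ c i j := hc0 i j (Finset.ne_of_mem_erase hj).symm
      have h1 : t j ^ 3 + u j ^ 3 ≤ p j + 2 * R ^ 3 := by
        have := huR3 j; simp only [hp]; linarith
      have h2 : p i * (t j ^ 3 + u j ^ 3) ≤ p i * (p j + 2 * R ^ 3) :=
        mul_le_mul_of_nonneg_left h1 (hpnn i)
      have h3 := mul_le_mul_of_nonneg_left h2 hcij
      nlinarith [h3]
    have hb2 : ∑ i, ∑ j ∈ Finset.univ.erase i, c i j * (p i * p j)
        ≤ ∑ i, ∑ j ∈ Finset.univ.erase i, c i j * p i ^ 2 := by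
      have hhalf : ∑ i, ∑ j ∈ Finset.univ.erase i, c i j * (p i * p j)
          ≤ ∑ i, ∑ j ∈ Finset.univ.erase i,
              (c i j * p i ^ 2 / 2 + c i j * p j ^ 2 / 2) := by
        have amgm : ∀ x y z : ℝ, 0 ≤ z → z * (x * y) ≤ z * x ^ 2 / 2 + z * y ^ 2 / 2 := by
          intro x y z hz
          nlinarith [mul_nonneg hz (sq_nonneg (x - y))]
        refine Finset.sum_le_sum fun i _ => Finset.sum_le_sum fun j hj => ?_
        exact amgm _ _ _ (hc0 i j (Finset.ne_of_mem_erase hj).symm)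
      have hsplit : ∑ i, ∑ j ∈ Finset.univ.erase i,
            (c i j * p i ^ 2 / 2 + c i j * p j ^ 2 / 2)
          = (∑ i, ∑ j ∈ Finset.univ.erase i, c i j * p i ^ 2) / 2
            + (∑ i, ∑ j ∈ Finset.univ.erase i, c i j * p j ^ 2) / 2 := by
        rw [Finset.sum_div, Finset.sum_div, ← Finset.sum_add_distrib]
        refine Finset.sum_congr rfl fun i _ => ?_
        rw [Finset.sum_div, Finset.sum_div, ← Finset.sum_add_distrib]
      rw [hsplit, hswap2] at hhalf
      linarith [hhalf]
    have hcollect : ∑ i, ∑ j ∈ Finset.univ.erase i,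
          (c i j * p i ^ 2 + c i j * (p i * (2 * R ^ 3)))
        = ∑ i, (C i * p i ^ 2 + C i * (p i * (2 * R ^ 3))) := by
      refine Finset.sum_congr rfl fun i _ => ?_
      rw [Finset.sum_add_distrib, ← Finset.sum_mul, ← Finset.sum_mul]
    have hperi : ∀ i, C i * p i ^ 2 + C i * (p i * (2 * R ^ 3))
        ≤ b i * (t i ^ 6 - u i ^ 6) - a i * (t i ^ 2 - u i ^ 2) := by
      intro i
      rcases le_or_gt (t i) R with h | h
      · have hui : u i = t i := min_eq_left h
        have hpi : p i = 0 := by simp [hp, hui]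
        rw [hpi, hui]
        norm_num
      · have hui : u i = R := min_eq_right h.le
        have hpi : p i = t i ^ 3 - R ^ 3 := by rw [hp]; simp [hui]
        rw [hpi, hui]
        have hx2 : R ^ 2 ≤ t i ^ 2 := by nlinarith [hR]
        have hx4 : R ^ 4 ≤ t i ^ 4 := by nlinarith [hR, hx2]
        have k1 : (0:ℝ) ≤ t i ^ 2 - R ^ 2 := by linarith
        have k2 : 3 * R ^ 4 ≤ t i ^ 4 + t i ^ 2 * R ^ 2 + R ^ 4 := by
          nlinarith [mul_le_mul_of_nonneg_right hx2 (sq_nonneg R)]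
        have k3 : a i * (t i ^ 2 - R ^ 2) ≤ 3 * (b i - C i) * R ^ 4 * (t i ^ 2 - R ^ 2) :=
          mul_le_mul_of_nonneg_right (haR i).le k1
        have k4 : 3 * (b i - C i) * R ^ 4 * (t i ^ 2 - R ^ 2)
            ≤ (b i - C i) * (t i ^ 4 + t i ^ 2 * R ^ 2 + R ^ 4) * (t i ^ 2 - R ^ 2) := by
          have hbCi : (0:ℝ) ≤ b i - C i := by linarith [hbC i]
          have := mul_le_mul_of_nonneg_left k2 hbCi
          nlinarith [mul_le_mul_of_nonneg_right this k1]
        nlinarith [k3, k4]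
    -- assemble
    rw [hJ]
    simp only
    have hfin : ∑ i, ∑ j ∈ Finset.univ.erase i, c i j * (p i * (t j ^ 3 + u j ^ 3))
        ≤ ∑ i, (b i * (t i ^ 6 - u i ^ 6) - a i * (t i ^ 2 - u i ^ 2)) := by
      calc ∑ i, ∑ j ∈ Finset.univ.erase i, c i j * (p i * (t j ^ 3 + u j ^ 3))
          ≤ ∑ i, ∑ j ∈ Finset.univ.erase i,
              (c i j * (p i * p j) + c i j * (p i * (2 * R ^ 3))) := hb1
        _ = ∑ i, ∑ j ∈ Finset.univ.erase i, c i j * (p i * p j)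
            + ∑ i, ∑ j ∈ Finset.univ.erase i, c i j * (p i * (2 * R ^ 3)) := by
            rw [← Finset.sum_add_distrib]
            exact Finset.sum_congr rfl fun i _ => by rw [← Finset.sum_add_distrib]
        _ ≤ ∑ i, ∑ j ∈ Finset.univ.erase i, c i j * p i ^ 2
            + ∑ i, ∑ j ∈ Finset.univ.erase i, c i j * (p i * (2 * R ^ 3)) := by
            linarith [hb2]
        _ = ∑ i, ∑ j ∈ Finset.univ.erase i,
              (c i j * p i ^ 2 + c i j * (p i * (2 * R ^ 3))) := by
            rw [← Finset.sum_add_distrib]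
            exact Finset.sum_congr rfl fun i _ => by rw [← Finset.sum_add_distrib]
        _ = ∑ i, (C i * p i ^ 2 + C i * (p i * (2 * R ^ 3))) := hcollect
        _ ≤ ∑ i, (b i * (t i ^ 6 - u i ^ 6) - a i * (t i ^ 2 - u i ^ 2)) :=
            Finset.sum_le_sum fun i _ => hperi i
    have hsum6 : ∑ i, (b i * (t i ^ 6 - u i ^ 6) - a i * (t i ^ 2 - u i ^ 2))
        = (∑ i, b i * t i ^ 6 - ∑ i, b i * u i ^ 6)
          - (∑ i, a i * t i ^ 2 - ∑ i, a i * u i ^ 2) := by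
      rw [← Finset.sum_sub_distrib, ← Finset.sum_sub_distrib, ← Finset.sum_sub_distrib]
      exact Finset.sum_congr rfl fun i _ => by ring
    rw [hid, hswap0] at hfin
    rw [hsum6] at hfin
    linarith [hfin]
  -- compact box maximum
  have hJcont : Continuous J := hdiffJ.continuous
  have hcomp : IsCompact (Set.pi Set.univ fun _ : Fin d => Set.Icc r R) :=
    isCompact_univ_pi fun _ => isCompact_Icc
  have hboxne : (Set.pi Set.univ fun _ : Fin d => Set.Icc r R).Nonempty :=
    ⟨fun _ => r, fun i _ => ⟨le_refl r, hrR⟩⟩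
  obtain ⟨t₀, ht₀mem, ht₀max⟩ := hcomp.exists_isMaxOn hboxne hJcont.continuousOn
  refine ⟨part1, t₀, fun i => ht₀mem i (Set.mem_univ i), fun t ht => ?_⟩
  have step1 : J t ≤ J (fun i => max (t i) r) := clampLow t fun i => (ht i).le
  have step2 : J (fun i => max (t i) r) ≤ J (fun i => min (max (t i) r) R) :=
    clampHigh _ fun i => le_trans hr.le (le_max_right _ _)
  have step3 : (fun i => min (max (t i) r) R) ∈ (Set.pi Set.univ fun _ : Fin d => Set.Icc r R) := by
    intro i _
    exact ⟨le_min (le_max_right _ _) hrR, min_le_right _ _⟩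
  calc J t ≤ J (fun i => max (t i) r) := step1
    _ ≤ J (fun i => min (max (t i) r) R) := step2
    _ ≤ J t₀ := ht₀max step3
end
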